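/- Let m > 0. For every s ∈ ℕⁿ, the polynomial f_s(W,z) = (s!)^{-1/2}·P_s(√(8πm)·z, W), viewed as a holomorphic function of (W,z) ∈ 𝔇_n × ℂⁿ (with independent coordinates W_{jk}, 1 ≤ j ≤ k ≤ n, of the symmetric matrix W), satisfies the system of differential equations ∂²f_s/∂z_j∂z_k = 8πm·(1 + δ_{jk})·∂f_s/∂W_{jk} for all 1 ≤ j ≤ k ≤ n. -/

import Mathlib

open Matrix
open scoped ComplexOrder Real Nat

/-- Entrywise complex conjugate of a matrix. -/
def cm {n : ℕ} (W : Matrix (Fin n) (Fin n) ℂ) : Matrix (Fin n) (Fin n) ℂ :=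
  W.map (starRingEnd ℂ)

/-- The Siegel disk `𝔇_n`. -/
def SiegelDisk (n : ℕ) : Set (Matrix (Fin n) (Fin n) ℂ) :=
  {W | W.IsSymm ∧ (1 - W * cm W).PosDef}

def tildeV {n : ℕ} (a : Matrix (Fin n) (Fin n) ℕ) : Fin n → ℕ :=
  fun k => a k k + ∑ i, a i k

def hatV {n : ℕ} (a : Matrix (Fin n) (Fin n) ℕ) : ℕ := ∑ i, a i i

def aFact {n : ℕ} (a : Matrix (Fin n) (Fin n) ℕ) : ℕ :=
  ∏ i, ∏ j, if i ≤ j then (a i j)! else 1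

def mPow {n : ℕ} (W : Matrix (Fin n) (Fin n) ℂ) (a : Matrix (Fin n) (Fin n) ℕ) : ℂ :=
  ∏ i, ∏ j, if i ≤ j then W i j ^ a i j else 1

def vPow {n : ℕ} (Z : Fin n → ℂ) (r : Fin n → ℕ) : ℂ := ∏ i, Z i ^ r i

def vFact {n : ℕ} (r : Fin n → ℕ) : ℕ := ∏ i, (r i)!

/-- The polynomial `P_s(Z,W)` from the expansion
`exp(U ᵗZ + ½ U W ᵗU) = ∑_s (U^s/s!) P_s(Z,W)`. -/
noncomputable def Ppoly {n : ℕ} (s : Fin n → ℕ) (Z : Fin n → ℂ)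
    (W : Matrix (Fin n) (Fin n) ℂ) : ℂ :=
  ∑' a : Matrix (Fin n) (Fin n) ℕ,
    if a.IsSymm ∧ ∀ k, tildeV a k ≤ s k then
      (vFact s : ℂ) /
          ((2 ^ hatV a : ℂ) * (aFact a : ℂ) * (vFact (fun k => s k - tildeV a k) : ℂ))
        * vPow Z (fun k => s k - tildeV a k) * mPow W a
    else 0

/-- `f_s(W,z) = (s!)^{-1/2} P_s(√(8πm) z, W)`. -/
noncomputable def fPoly {n : ℕ} (m : ℝ) (s : Fin n → ℕ)
    (W : Matrix (Fin n) (Fin n) ℂ) (z : Fin n → ℂ) : ℂ :=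
  ((Real.sqrt (vFact s) : ℂ))⁻¹ *
    Ppoly s (fun i => (Real.sqrt (8 * π * m) : ℂ) * z i) W

/-- Holomorphic partial derivative in the `j`-th coordinate of `ℂⁿ`. -/
noncomputable def pdZ {n : ℕ} (f : (Fin n → ℂ) → ℂ) (j : Fin n) (z : Fin n → ℂ) : ℂ :=
  deriv (fun t => f (Function.update z j t)) (z j)

/-- Holomorphic partial derivative in the matrix entry `W_{jk}`. -/
noncomputable def pdW {n : ℕ} (f : Matrix (Fin n) (Fin n) ℂ → ℂ) (j k : Fin n)
    (W : Matrix (Fin n) (Fin n) ℂ) : ℂ :=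
  deriv (fun t => f (W.updateRow j (Function.update (W j) k t))) (W j k)

/-! ### Auxiliary definitions -/

section Aux
variable {n : ℕ}

def rr (s : Fin n → ℕ) (a : Matrix (Fin n) (Fin n) ℕ) : Fin n → ℕ :=
  fun k => s k - tildeV a k

noncomputable def Cc (s : Fin n → ℕ) (a : Matrix (Fin n) (Fin n) ℕ) : ℂ :=
  (vFact s : ℂ) / ((2 ^ hatV a : ℂ) * (aFact a : ℂ) * (vFact (rr s a) : ℂ))

def Pg (s : Fin n → ℕ) (a : Matrix (Fin n) (Fin n) ℕ) : Prop :=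
  a.IsSymm ∧ ∀ k, tildeV a k ≤ s k

instance (s : Fin n → ℕ) : DecidablePred (Pg s) := fun _ => instDecidableAnd

/-! ### Product splitting -/

lemma prod2_eq {M : Type*} [CommMonoid M] (f : Fin n → Fin n → M) :
    (∏ i, ∏ l, f i l) = ∏ p : Fin n × Fin n, f p.1 p.2 := by
  rw [← Finset.prod_product', Finset.univ_product_univ]

lemma prod2_split {M : Type*} [CommMonoid M] (f : Fin n → Fin n → M) (j k : Fin n) :
    (∏ i, ∏ l, f i l) = f j k * ∏ p ∈ Finset.univ.erase (j, k), f p.1 p.2 := by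
  rw [prod2_eq, ← Finset.mul_prod_erase _ _ (Finset.mem_univ (j, k))]

/-! ### Monomial derivative lemmas -/

lemma vPow_update_left (z : Fin n → ℂ) (k : Fin n) (t : ℂ) (q : Fin n → ℕ) :
    vPow (Function.update z k t) q = t ^ q k * ∏ i ∈ Finset.univ.erase k, z i ^ q i := by
  rw [vPow, ← Finset.mul_prod_erase _ _ (Finset.mem_univ k), Function.update_self]
  exact congrArg _ (Finset.prod_congr rfl fun i hi => by
    rw [Function.update_of_ne (Finset.mem_erase.1 hi).1])

lemma vPow_update_exp (z : Fin n → ℂ) (k : Fin n) (m : ℕ) (q : Fin n → ℕ) :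
    vPow z (Function.update q k m) = z k ^ m * ∏ i ∈ Finset.univ.erase k, z i ^ q i := by
  rw [vPow, ← Finset.mul_prod_erase _ _ (Finset.mem_univ k), Function.update_self]
  exact congrArg _ (Finset.prod_congr rfl fun i hi => by
    rw [Function.update_of_ne (Finset.mem_erase.1 hi).1])

lemma vPow_smul (c : ℂ) (z : Fin n → ℂ) (r : Fin n → ℕ) :
    vPow (fun i => c * z i) r = c ^ (∑ i, r i) * vPow z r := by
  simp [vPow, mul_pow, Finset.prod_mul_distrib, Finset.prod_pow_eq_pow_sum]

lemma key_diffAt (c : ℂ) (z : Fin n → ℂ) (k : Fin n) (q : Fin n → ℕ) (t : ℂ) :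
    DifferentiableAt ℂ (fun t => c * vPow (Function.update z k t) q) t := by
  simp only [vPow_update_left]
  fun_prop

lemma key_deriv (c : ℂ) (q : Fin n → ℕ) (k : Fin n) (z : Fin n → ℂ) :
    deriv (fun t => c * vPow (Function.update z k t) q) (z k)
      = c * (q k : ℂ) * vPow z (Function.update q k (q k - 1)) := by
  simp only [vPow_update_left, vPow_update_exp]
  rw [show (fun t => c * (t ^ q k * ∏ i ∈ Finset.univ.erase k, z i ^ q i))
      = (fun t => (c * ∏ i ∈ Finset.univ.erase k, z i ^ q i) * t ^ q k) from
    funext fun t => by ring]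
  rw [deriv_const_mul_field, deriv_pow_field]
  ring

lemma pdZ_sum {ι : Type*} (F : Finset ι) (P : ι → Prop) [DecidablePred P]
    (c : ι → ℂ) (q : ι → Fin n → ℕ) (k : Fin n) (z : Fin n → ℂ) :
    pdZ (fun z => ∑ a ∈ F, if P a then c a * vPow z (q a) else 0) k z
      = ∑ a ∈ F, if P a then c a * (q a k : ℂ) * vPow z (Function.update (q a) k (q a k - 1))
          else 0 := by
  rw [pdZ, deriv_fun_sum]
  · refine Finset.sum_congr rfl fun a _ => ?_
    by_cases h : P a
    · simp only [if_pos h]; exact key_deriv (c a) (q a) k z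
    · simp [h]
  · intro a _
    by_cases h : P a
    · simp only [if_pos h]; exact key_diffAt (c a) z k (q a) (z k)
    · simp only [if_neg h]; exact differentiableAt_const 0

def mPowE (W : Matrix (Fin n) (Fin n) ℂ) (a : Matrix (Fin n) (Fin n) ℕ) (j k : Fin n) : ℂ :=
  ∏ p ∈ Finset.univ.erase (j, k), (if p.1 ≤ p.2 then W p.1 p.2 ^ a p.1 p.2 else 1)

lemma mPow_split {W : Matrix (Fin n) (Fin n) ℂ} {a : Matrix (Fin n) (Fin n) ℕ} {j k : Fin n}
    (hjk : j ≤ k) : mPow W a = W j k ^ a j k * mPowE W a j k := by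
  rw [mPow, prod2_split (fun i l => if i ≤ l then W i l ^ a i l else 1) j k, if_pos hjk]
  rfl

lemma mPow_updateRow {W : Matrix (Fin n) (Fin n) ℂ} {a : Matrix (Fin n) (Fin n) ℕ} {j k : Fin n}
    (hjk : j ≤ k) (t : ℂ) :
    mPow (W.updateRow j (Function.update (W j) k t)) a = t ^ a j k * mPowE W a j k := by
  rw [mPow_split hjk, Matrix.updateRow_self, Function.update_self]
  congr 1
  refine Finset.prod_congr rfl fun p hp => ?_
  obtain ⟨hne, -⟩ := Finset.mem_erase.1 hp
  by_cases h1 : p.1 = j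
  · have h2 : p.2 ≠ k := fun h2 => hne (Prod.ext h1 h2)
    rw [h1, Matrix.updateRow_self, Function.update_of_ne h2]
  · rw [Matrix.updateRow_ne h1]

lemma keyW_diffAt (c : ℂ) (W : Matrix (Fin n) (Fin n) ℂ) (a : Matrix (Fin n) (Fin n) ℕ)
    {j k : Fin n} (hjk : j ≤ k) (t : ℂ) :
    DifferentiableAt ℂ (fun t => c * mPow (W.updateRow j (Function.update (W j) k t)) a) t := by
  simp only [mPow_updateRow hjk]
  fun_prop

lemma keyW_deriv (c : ℂ) (W : Matrix (Fin n) (Fin n) ℂ) (a : Matrix (Fin n) (Fin n) ℕ)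
    {j k : Fin n} (hjk : j ≤ k) :
    deriv (fun t => c * mPow (W.updateRow j (Function.update (W j) k t)) a) (W j k)
      = c * (a j k : ℂ) * (W j k ^ (a j k - 1) * mPowE W a j k) := by
  simp only [mPow_updateRow hjk]
  rw [show (fun t => c * (t ^ a j k * mPowE W a j k))
      = (fun t => (c * mPowE W a j k) * t ^ a j k) from funext fun t => by ring]
  rw [deriv_const_mul_field, deriv_pow_field]
  ring

lemma pdW_sum {ι : Type*} (F : Finset ι) (P : ι → Prop) [DecidablePred P]
    (c : ι → ℂ) (b : ι → Matrix (Fin n) (Fin n) ℕ) {j k : Fin n} (hjk : j ≤ k)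
    (W : Matrix (Fin n) (Fin n) ℂ) :
    pdW (fun W' => ∑ a ∈ F, if P a then c a * mPow W' (b a) else 0) j k W
      = ∑ a ∈ F, if P a then
          c a * (b a j k : ℂ) * (W j k ^ (b a j k - 1) * mPowE W (b a) j k) else 0 := by
  rw [pdW, deriv_fun_sum]
  · refine Finset.sum_congr rfl fun a _ => ?_
    by_cases h : P a
    · simp only [if_pos h]; exact keyW_deriv (c a) W (b a) hjk
    · simp [h]
  · intro a _
    by_cases h : P a
    · simp only [if_pos h]; exact keyW_diffAt (c a) W (b a) hjk (W j k)
    · simp only [if_neg h]; exact differentiableAt_const 0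

/-! ### Combinatorics of the shift matrix `dd` -/

def dd (j k : Fin n) : Matrix (Fin n) (Fin n) ℕ :=
  Matrix.of fun i l => if (i = j ∧ l = k) ∨ (i = k ∧ l = j) then 1 else 0

lemma dd_apply (j k i l : Fin n) :
    dd j k i l = if (i = j ∧ l = k) ∨ (i = k ∧ l = j) then 1 else 0 := rfl

lemma dd_symm_apply (j k i l : Fin n) : dd j k l i = dd j k i l := by
  simp only [dd_apply]; congr 1; simp only [eq_iff_iff]; tauto

lemma dd_self (j k : Fin n) : dd j k j k = 1 := by simp [dd_apply]

lemma dd_eq_zero {j k : Fin n} (hjk : j ≤ k) {p : Fin n × Fin n} (hp : p ≠ (j, k))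
    (hle : p.1 ≤ p.2) : dd j k p.1 p.2 = 0 := by
  rw [dd_apply, if_neg]
  rintro (⟨h1, h2⟩ | ⟨h1, h2⟩)
  · exact hp (Prod.ext h1 h2)
  · have : j = k := le_antisymm hjk (h1 ▸ h2 ▸ hle)
    exact hp (Prod.ext (h1.trans this.symm) (h2.trans this))

lemma tildeV_add (a b : Matrix (Fin n) (Fin n) ℕ) (l : Fin n) :
    tildeV (a + b) l = tildeV a l + tildeV b l := by
  simp only [tildeV, Matrix.add_apply, Finset.sum_add_distrib]; ring

lemma tildeV_dd (j k l : Fin n) :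
    tildeV (dd j k) l = (if l = j then 1 else 0) + (if l = k then 1 else 0) := by
  by_cases h1 : j = k
  · subst h1
    by_cases h2 : l = j <;>
      simp [tildeV, dd_apply, h2, Finset.sum_ite_eq' Finset.univ, and_comm]
  · by_cases h2 : l = j <;> by_cases h3 : l = k
    · exact absurd (h2.symm.trans h3) h1
    all_goals
      simp [tildeV, dd_apply, h2, h3, h1, Ne.symm h1, Finset.sum_ite_eq' Finset.univ,
        Finset.sum_ite_eq Finset.univ]

lemma hatV_add (a b : Matrix (Fin n) (Fin n) ℕ) : hatV (a + b) = hatV a + hatV b := by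
  simp [hatV, Matrix.add_apply, Finset.sum_add_distrib]

lemma hatV_dd (j k : Fin n) : hatV (dd j k) = if j = k then 1 else 0 := by
  by_cases h : j = k
  · subst h; simp [hatV, dd_apply, Finset.sum_ite_eq' Finset.univ, and_self]
  · rw [if_neg h]
    refine Finset.sum_eq_zero fun i _ => ?_
    rw [dd_apply, if_neg]
    rintro (⟨rfl, h2⟩ | ⟨rfl, h2⟩)
    · exact h h2
    · exact h h2.symm

lemma aFact_add_dd (a : Matrix (Fin n) (Fin n) ℕ) {j k : Fin n} (hjk : j ≤ k) :
    aFact (a + dd j k) = (a j k + 1) * aFact a := by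
  rw [aFact, aFact, prod2_split (fun i l => if i ≤ l then ((a + dd j k) i l)! else 1) j k,
    prod2_split (fun i l => if i ≤ l then (a i l)! else 1) j k, if_pos hjk, if_pos hjk]
  have h1 : ((a + dd j k) j k)! = (a j k + 1) * (a j k)! := by
    rw [Matrix.add_apply, dd_self, Nat.factorial_succ]
  have h2 : ∀ p ∈ Finset.univ.erase (j, k),
      (if p.1 ≤ p.2 then ((a + dd j k) p.1 p.2)! else 1)
        = (if p.1 ≤ p.2 then (a p.1 p.2)! else 1) := by
    intro p hp
    by_cases hle : p.1 ≤ p.2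
    · rw [if_pos hle, if_pos hle, Matrix.add_apply,
        dd_eq_zero hjk (Finset.mem_erase.1 hp).1 hle, Nat.add_zero]
    · rw [if_neg hle, if_neg hle]
  rw [h1, Finset.prod_congr rfl h2]; ring

lemma mPowE_add_dd (W : Matrix (Fin n) (Fin n) ℂ) (a : Matrix (Fin n) (Fin n) ℕ)
    {j k : Fin n} (hjk : j ≤ k) : mPowE W (a + dd j k) j k = mPowE W a j k := by
  refine Finset.prod_congr rfl fun p hp => ?_
  by_cases hle : p.1 ≤ p.2
  · rw [if_pos hle, if_pos hle, Matrix.add_apply,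
      dd_eq_zero hjk (Finset.mem_erase.1 hp).1 hle, Nat.add_zero]
  · rw [if_neg hle, if_neg hle]

lemma vFact_update {q : Fin n → ℕ} {l : Fin n} (h : 0 < q l) :
    vFact q = q l * vFact (Function.update q l (q l - 1)) := by
  rw [vFact, vFact, ← Finset.mul_prod_erase _ _ (Finset.mem_univ l),
    ← Finset.mul_prod_erase _ (fun i => (Function.update q l (q l - 1) i)!) (Finset.mem_univ l),
    Function.update_self]
  have hprod : (∏ i ∈ Finset.univ.erase l, (Function.update q l (q l - 1) i)!)
      = ∏ i ∈ Finset.univ.erase l, (q i)! :=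
    Finset.prod_congr rfl fun i hi => by rw [Function.update_of_ne (Finset.mem_erase.1 hi).1]
  rw [hprod, ← mul_assoc, Nat.mul_factorial_pred h.ne']

lemma symm_ent {a : Matrix (Fin n) (Fin n) ℕ} (h : a.IsSymm) (i l : Fin n) :
    a l i = a i l := congrFun (congrFun h i) l

lemma symm_mk {a : Matrix (Fin n) (Fin n) ℕ} (h : ∀ i l, a l i = a i l) : a.IsSymm := by
  ext i l
  exact h i l

lemma isSymm_add_dd_iff {a : Matrix (Fin n) (Fin n) ℕ} {j k : Fin n} :
    (a + dd j k).IsSymm ↔ a.IsSymm := by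
  constructor <;> intro h
  · refine symm_mk fun i l => ?_
    have h1 := symm_ent h i l
    have h2 := dd_symm_apply j k i l
    simp only [Matrix.add_apply] at h1
    omega
  · refine symm_mk fun i l => ?_
    simp only [Matrix.add_apply, symm_ent h i l, dd_symm_apply j k i l]

lemma add_dd_sub (a : Matrix (Fin n) (Fin n) ℕ) (j k : Fin n) : a + dd j k - dd j k = a := by
  ext i l
  simp only [Matrix.sub_apply, Matrix.add_apply]
  omega

lemma sub_dd_add {b : Matrix (Fin n) (Fin n) ℕ} {j k : Fin n} (hs : b.IsSymm)
    (hb : 0 < b j k) : b - dd j k + dd j k = b := by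
  have hkj : b k j = b j k := symm_ent hs j k
  ext i l
  simp only [Matrix.add_apply, Matrix.sub_apply, dd_apply]
  split_ifs with hc
  · rcases hc with ⟨rfl, rfl⟩ | ⟨rfl, rfl⟩ <;> omega
  · omega

/-! ### Finite support -/

def Ffin (n M : ℕ) : Finset (Matrix (Fin n) (Fin n) ℕ) :=
  Finset.image (fun g : Fin n → Fin n → Fin (M + 1) => Matrix.of fun i l => (g i l : ℕ))
    Finset.univ

lemma mem_Ffin {M : ℕ} {a : Matrix (Fin n) (Fin n) ℕ} (h : ∀ i l, a i l ≤ M) :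
    a ∈ Ffin n M := by
  refine Finset.mem_image.2 ⟨fun i l => ⟨a i l, Nat.lt_succ_of_le (h i l)⟩, Finset.mem_univ _, ?_⟩
  ext i l
  rfl

lemma entry_le_tildeV (a : Matrix (Fin n) (Fin n) ℕ) (i l : Fin n) : a i l ≤ tildeV a l :=
  le_trans (Finset.single_le_sum (fun i _ => Nat.zero_le (a i l)) (Finset.mem_univ i))
    (Nat.le_add_left _ _)

lemma aFact_pos (a : Matrix (Fin n) (Fin n) ℕ) : 0 < aFact a :=
  Finset.prod_pos fun i _ => Finset.prod_pos fun l _ => by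
    split_ifs
    · exact Nat.factorial_pos _
    · exact Nat.one_pos

lemma vFact_pos (r : Fin n → ℕ) : 0 < vFact r :=
  Finset.prod_pos fun i _ => Nat.factorial_pos _

end Aux

/-! ### The termwise identity -/

lemma alg_eq (S X A V rk qj : ℂ) (hX : X ≠ 0) (hA : A ≠ 0) (hV : V ≠ 0)
    (hrk : rk ≠ 0) (hqj : qj ≠ 0) :
    S / (X * A * (rk * (qj * V))) * rk * qj = S / (X * A * V) := by
  field_simp

lemma alg_eq2 (S X A V c : ℂ) (hX : X ≠ 0) (hA : A ≠ 0) (hV : V ≠ 0) (hc : c + 1 ≠ 0) :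
    S / (X * ((c + 1) * A) * V) * (c + 1) = S / (X * A * V) := by
  field_simp

lemma alg_eq3 (S X A V c : ℂ) (hX : X ≠ 0) (hA : A ≠ 0) (hV : V ≠ 0) (hc : c + 1 ≠ 0) :
    ((1 : ℂ) + 1) * (S / ((X * 2) * ((c + 1) * A) * V) * (c + 1)) = S / (X * A * V) := by
  field_simp
  ring

lemma termwise {n : ℕ} (s : Fin n → ℕ) (W : Matrix (Fin n) (Fin n) ℂ) (z : Fin n → ℂ)
    (ν lam : ℂ) {j k : Fin n} (hjk : j ≤ k) (a : Matrix (Fin n) (Fin n) ℕ)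
    (h1 : 0 < rr s a k) (h2 : 0 < Function.update (rr s a) k (rr s a k - 1) j) :
    (ν * Cc s a * lam ^ (∑ l, rr s a l) * mPow W a) * ((rr s a k : ℕ) : ℂ) *
        ((Function.update (rr s a) k (rr s a k - 1) j : ℕ) : ℂ) *
        vPow z (Function.update (Function.update (rr s a) k (rr s a k - 1)) j
          (Function.update (rr s a) k (rr s a k - 1) j - 1))
      = (lam ^ 2 * (1 + if j = k then 1 else 0)) *
        ((ν * Cc s (a + dd j k) * lam ^ (∑ l, rr s (a + dd j k) l) *
            vPow z (rr s (a + dd j k))) *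
          (((a + dd j k) j k : ℕ) : ℂ) *
          (W j k ^ ((a + dd j k) j k - 1) * mPowE W (a + dd j k) j k)) := by
  set q : Fin n → ℕ := Function.update (rr s a) k (rr s a k - 1) with hq
  set u : Fin n → ℕ := Function.update q j (q j - 1) with hu
  have hbe : (a + dd j k) j k = a j k + 1 := by
    simp [Matrix.add_apply, dd_self]
  have h2' : 0 < q j := h2
  rw [hq, Function.update_apply] at h2'
  -- r(a+Δ) = u
  have hrb : rr s (a + dd j k) = u := by
    funext l
    simp only [hu, hq, rr, tildeV_add, tildeV_dd, Function.update_apply]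
    split_ifs <;> subst_vars <;> first | omega | simp_all
  -- sum of exponents drops by two
  have hptw : ∀ l, rr s a l
      = rr s (a + dd j k) l + ((if l = j then 1 else 0) + (if l = k then 1 else 0)) := by
    intro l
    have h1' : 0 < s k - tildeV a k := h1
    simp only [rr, tildeV_add, tildeV_dd]
    split_ifs at h2' ⊢ <;> subst_vars <;> first | omega | simp_all [rr] | skip
    all_goals omega
  have hsum : ∑ l, rr s a l = (∑ l, rr s (a + dd j k) l) + 2 := by
    rw [Finset.sum_congr rfl fun l _ => hptw l, Finset.sum_add_distrib,
      Finset.sum_add_distrib]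
    simp [Finset.sum_ite_eq' Finset.univ]
  -- factorial identities
  have hva : vFact (rr s a) = rr s a k * (q j * vFact u) := by
    rw [vFact_update h1, ← hq, vFact_update h2, ← hu]
  have haF : aFact (a + dd j k) = (a j k + 1) * aFact a := aFact_add_dd a hjk
  have hhV : hatV (a + dd j k) = hatV a + (if j = k then 1 else 0) := by
    rw [hatV_add, hatV_dd]
  have hmE : mPowE W (a + dd j k) j k = mPowE W a j k := mPowE_add_dd W a hjk
  have hmP : mPow W a = W j k ^ a j k * mPowE W a j k := mPow_split hjk
  -- nonvanishing facts
  have hA : ((aFact a : ℕ) : ℂ) ≠ 0 := Nat.cast_ne_zero.2 (aFact_pos a).ne'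
  have hV : ((vFact u : ℕ) : ℂ) ≠ 0 := Nat.cast_ne_zero.2 (vFact_pos u).ne'
  have h2h : ((2 : ℂ) ^ hatV a) ≠ 0 := pow_ne_zero _ two_ne_zero
  have hrk : ((rr s a k : ℕ) : ℂ) ≠ 0 := Nat.cast_ne_zero.2 h1.ne'
  have hqj0 : ((q j : ℕ) : ℂ) ≠ 0 := Nat.cast_ne_zero.2 h2.ne'
  have hc1 : ((a j k : ℕ) : ℂ) + 1 ≠ 0 := by
    have h := Nat.cast_ne_zero (R := ℂ).2 (Nat.succ_ne_zero (a j k))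
    push_cast at h
    exact h
  have hva' : ((vFact (rr s a) : ℕ) : ℂ)
      = ((rr s a k : ℕ) : ℂ) * (((q j : ℕ) : ℂ) * ((vFact u : ℕ) : ℂ)) := by
    exact_mod_cast congrArg (Nat.cast : ℕ → ℂ) hva
  -- assemble
  rw [Cc, Cc, hbe, hsum, hrb, haF, hhV, hva', Nat.add_sub_cancel]
  have hcast : (((a j k + 1 : ℕ)) : ℂ) = ((a j k : ℕ) : ℂ) + 1 := by push_cast; ring
  have hcast2 : (((a j k + 1 : ℕ) * aFact a : ℕ) : ℂ)
      = (((a j k : ℕ) : ℂ) + 1) * ((aFact a : ℕ) : ℂ) := by push_cast; ring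
  rw [hcast, hcast2, hmE, hmP]
  by_cases hd : j = k
  · rw [if_pos hd, if_pos hd, pow_add (2 : ℂ) (hatV a) 1, pow_one]
    have key := alg_eq (vFact s : ℂ) ((2:ℂ) ^ hatV a) ((aFact a : ℕ) : ℂ)
      ((vFact u : ℕ) : ℂ) ((rr s a k : ℕ) : ℂ) ((q j : ℕ) : ℂ) h2h hA hV hrk hqj0
    have key3 := alg_eq3 (vFact s : ℂ) ((2:ℂ) ^ hatV a) ((aFact a : ℕ) : ℂ)
      ((vFact u : ℕ) : ℂ) ((a j k : ℕ) : ℂ) h2h hA hV hc1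
    linear_combination
      (ν * lam ^ ((∑ l, u l) + 2) * (W j k ^ a j k * mPowE W a j k) * vPow z u) * key
      - (lam ^ 2 * ν * lam ^ (∑ l, u l) * vPow z u * (W j k ^ a j k * mPowE W a j k)) * key3
  · rw [if_neg hd, if_neg hd, Nat.add_zero]
    have key := alg_eq (vFact s : ℂ) ((2:ℂ) ^ hatV a) ((aFact a : ℕ) : ℂ)
      ((vFact u : ℕ) : ℂ) ((rr s a k : ℕ) : ℂ) ((q j : ℕ) : ℂ) h2h hA hV hrk hqj0
    have key2 := alg_eq2 (vFact s : ℂ) ((2:ℂ) ^ hatV a) ((aFact a : ℕ) : ℂ)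
      ((vFact u : ℕ) : ℂ) ((a j k : ℕ) : ℂ) h2h hA hV hc1
    linear_combination
      (ν * lam ^ ((∑ l, u l) + 2) * (W j k ^ a j k * mPowE W a j k) * vPow z u) * key
      - (lam ^ 2 * ν * lam ^ (∑ l, u l) * vPow z u * (W j k ^ a j k * mPowE W a j k)) * key2

lemma Pg_add_dd {n : ℕ} {s : Fin n → ℕ} {a : Matrix (Fin n) (Fin n) ℕ} {j k : Fin n}
    (hPg : Pg s a) (hr1 : 0 < rr s a k)
    (hr2 : 0 < Function.update (rr s a) k (rr s a k - 1) j) : Pg s (a + dd j k) := by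
  have h2' : 0 < (if j = k then rr s a k - 1 else rr s a j) := by
    rw [Function.update_apply] at hr2; exact hr2
  refine ⟨isSymm_add_dd_iff.2 hPg.1, fun l => ?_⟩
  have e1 : 0 < s k - tildeV a k := hr1
  have e2 : tildeV a l ≤ s l := hPg.2 l
  have e3 : tildeV a j ≤ s j := hPg.2 j
  have e4 : tildeV a k ≤ s k := hPg.2 k
  rw [tildeV_add, tildeV_dd]
  by_cases hlj : l = j <;> by_cases hlk : l = k <;> by_cases hd : j = k <;>
    simp only [rr] at h2' e1 <;> subst_vars <;> simp_all <;> omega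

lemma Pg_sub_dd {n : ℕ} {s : Fin n → ℕ} {b : Matrix (Fin n) (Fin n) ℕ} {j k : Fin n}
    (hPg : Pg s b) (hb : 0 < b j k) :
    Pg s (b - dd j k) ∧ 0 < rr s (b - dd j k) k ∧
      0 < Function.update (rr s (b - dd j k)) k (rr s (b - dd j k) k - 1) j := by
  have hba : b - dd j k + dd j k = b := sub_dd_add hPg.1 hb
  have hsym : (b - dd j k).IsSymm := isSymm_add_dd_iff.1 (by rw [hba]; exact hPg.1)
  have htv : ∀ l, tildeV (b - dd j k) l
      + ((if l = j then 1 else 0) + (if l = k then 1 else 0)) = tildeV b l := by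
    intro l
    conv_rhs => rw [← hba]
    rw [tildeV_add, tildeV_dd]
  refine ⟨⟨hsym, fun l => ?_⟩, ?_, ?_⟩
  · have := htv l; have := hPg.2 l; omega
  · have h5 := htv k
    have h6 := hPg.2 k
    simp only [rr]
    by_cases hd : j = k <;> subst_vars <;> simp_all <;> omega
  · rw [Function.update_apply]
    have h5 := htv k
    have h6 := hPg.2 k
    have h7 := htv j
    have h8 := hPg.2 j
    simp only [rr]
    by_cases hd : j = k <;> subst_vars <;> simp_all <;> omega

/-- `∂²f_s/∂z_j∂z_k = 8πm (1 + δ_{jk}) ∂f_s/∂W_{jk}` for `1 ≤ j ≤ k ≤ n`, on `𝔇_n × ℂⁿ`. -/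
theorem stmt15 (n : ℕ) (m : ℝ) (hm : 0 < m) (s : Fin n → ℕ)
    (W : Matrix (Fin n) (Fin n) ℂ) (hW : W ∈ SiegelDisk n) (z : Fin n → ℂ)
    (j k : Fin n) (hjk : j ≤ k) :
    pdZ (fun z' => pdZ (fun z'' => fPoly m s W z'') k z') j z
      = (8 * π * m : ℝ) * (1 + if j = k then 1 else 0) *
        pdW (fun W' => fPoly m s W' z) j k W := by
  classical
  have hπm : (0:ℝ) ≤ 8 * π * m := by positivity
  have hlam2 : ((Real.sqrt (8 * π * m) : ℝ) : ℂ) ^ 2 = ((8 * π * m : ℝ) : ℂ) := by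
    rw [← Complex.ofReal_pow, Real.sq_sqrt hπm]
  set F : Finset (Matrix (Fin n) (Fin n) ℕ) := Ffin n (∑ l, s l) with hF
  have hsupp : ∀ a : Matrix (Fin n) (Fin n) ℕ, Pg s a → a ∈ F := by
    intro a ha
    refine mem_Ffin fun i l => ?_
    exact le_trans (le_trans (entry_le_tildeV a i l) (ha.2 l))
      (Finset.single_le_sum (fun _ _ => Nat.zero_le _) (Finset.mem_univ l))
  have hPp : ∀ (Z : Fin n → ℂ) (W' : Matrix (Fin n) (Fin n) ℂ),
      Ppoly s Z W'
        = ∑ a ∈ F, (if Pg s a then Cc s a * vPow Z (rr s a) * mPow W' a else 0) := by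
    intro Z W'
    rw [Ppoly, tsum_eq_sum (s := F) ?hvan]
    case hvan => exact fun b hb => if_neg fun hc => hb (hsupp b hc)
    refine Finset.sum_congr rfl fun a _ => ?_
    by_cases h : Pg s a
    · rw [if_pos (show a.IsSymm ∧ ∀ k, tildeV a k ≤ s k from h), if_pos h]
      rfl
    · rw [if_neg (show ¬(a.IsSymm ∧ ∀ k, tildeV a k ≤ s k) from h), if_neg h]
  have hf : ∀ (W' : Matrix (Fin n) (Fin n) ℂ) (z' : Fin n → ℂ),
      fPoly m s W' z' = ∑ a ∈ F, (if Pg s a then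
        (((Real.sqrt (vFact s) : ℂ))⁻¹ * Cc s a *
          ((Real.sqrt (8 * π * m) : ℂ)) ^ (∑ l, rr s a l) * mPow W' a)
          * vPow z' (rr s a) else 0) := by
    intro W' z'
    rw [fPoly, hPp, Finset.mul_sum]
    refine Finset.sum_congr rfl fun a _ => ?_
    by_cases h : Pg s a
    · rw [if_pos h, if_pos h, vPow_smul]
      ring
    · rw [if_neg h, if_neg h, mul_zero]
  have hf2 : ∀ (W' : Matrix (Fin n) (Fin n) ℂ),
      fPoly m s W' z = ∑ a ∈ F, (if Pg s a then
        (((Real.sqrt (vFact s) : ℂ))⁻¹ * Cc s a *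
          ((Real.sqrt (8 * π * m) : ℂ)) ^ (∑ l, rr s a l) * vPow z (rr s a))
          * mPow W' a else 0) := by
    intro W'
    rw [fPoly, hPp, Finset.mul_sum]
    refine Finset.sum_congr rfl fun a _ => ?_
    by_cases h : Pg s a
    · rw [if_pos h, if_pos h, vPow_smul]
      ring
    · rw [if_neg h, if_neg h, mul_zero]
  have hin : ∀ z' : Fin n → ℂ,
      pdZ (fun z'' => fPoly m s W z'') k z' = ∑ a ∈ F, (if Pg s a then
        (((Real.sqrt (vFact s) : ℂ))⁻¹ * Cc s a *
          ((Real.sqrt (8 * π * m) : ℂ)) ^ (∑ l, rr s a l) * mPow W a)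
          * ((rr s a k : ℕ) : ℂ)
          * vPow z' (Function.update (rr s a) k (rr s a k - 1)) else 0) := by
    intro z'
    rw [show (fun z'' => fPoly m s W z'') = fun z'' => ∑ a ∈ F, (if Pg s a then
        (((Real.sqrt (vFact s) : ℂ))⁻¹ * Cc s a *
          ((Real.sqrt (8 * π * m) : ℂ)) ^ (∑ l, rr s a l) * mPow W a)
          * vPow z'' (rr s a) else 0) from funext fun z'' => hf W z'']
    exact pdZ_sum F (Pg s) _ _ k z'
  have hLHS : pdZ (fun z' => pdZ (fun z'' => fPoly m s W z'') k z') j z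
      = ∑ a ∈ F, (if Pg s a then
        (((Real.sqrt (vFact s) : ℂ))⁻¹ * Cc s a *
          ((Real.sqrt (8 * π * m) : ℂ)) ^ (∑ l, rr s a l) * mPow W a)
          * ((rr s a k : ℕ) : ℂ)
          * ((Function.update (rr s a) k (rr s a k - 1) j : ℕ) : ℂ)
          * vPow z (Function.update (Function.update (rr s a) k (rr s a k - 1)) j
              (Function.update (rr s a) k (rr s a k - 1) j - 1)) else 0) := by
    rw [show (fun z' => pdZ (fun z'' => fPoly m s W z'') k z') = fun z' => ∑ a ∈ F,
        (if Pg s a then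
        ((((Real.sqrt (vFact s) : ℂ))⁻¹ * Cc s a *
          ((Real.sqrt (8 * π * m) : ℂ)) ^ (∑ l, rr s a l) * mPow W a)
          * ((rr s a k : ℕ) : ℂ))
          * vPow z' (Function.update (rr s a) k (rr s a k - 1)) else 0)
      from funext fun z' => hin z']
    exact pdZ_sum F (Pg s) _ _ j z
  have hRHS : pdW (fun W' => fPoly m s W' z) j k W
      = ∑ b ∈ F, (if Pg s b then
        (((Real.sqrt (vFact s) : ℂ))⁻¹ * Cc s b *
          ((Real.sqrt (8 * π * m) : ℂ)) ^ (∑ l, rr s b l) * vPow z (rr s b))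
          * ((b j k : ℕ) : ℂ)
          * (W j k ^ (b j k - 1) * mPowE W b j k) else 0) := by
    rw [show (fun W' => fPoly m s W' z) = fun W' => ∑ a ∈ F, (if Pg s a then
        (((Real.sqrt (vFact s) : ℂ))⁻¹ * Cc s a *
          ((Real.sqrt (8 * π * m) : ℂ)) ^ (∑ l, rr s a l) * vPow z (rr s a))
          * mPow W' a else 0) from funext fun W' => hf2 W']
    exact pdW_sum F (Pg s) _ (fun b => b) hjk W
  rw [hLHS, hRHS, Finset.mul_sum]
  rw [← Finset.sum_filter_of_ne (s := F)
      (p := fun a => Pg s a ∧ 0 < rr s a k ∧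
        0 < Function.update (rr s a) k (rr s a k - 1) j) ?hL,
    ← Finset.sum_filter_of_ne (s := F) (p := fun b => Pg s b ∧ 0 < b j k) ?hR]
  case hL =>
    intro a _ hne
    by_cases h0 : Pg s a
    · refine ⟨h0, ?_, ?_⟩
      · by_contra hc
        apply hne
        rw [if_pos h0]
        have hz : rr s a k = 0 := by omega
        rw [hz]
        simp
      · by_contra hc
        apply hne
        rw [if_pos h0]
        have hz : Function.update (rr s a) k (rr s a k - 1) j = 0 := by omega
        rw [hz]
        simp
    · exact absurd (if_neg h0) hne
  case hR =>
    intro b _ hne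
    by_cases h0 : Pg s b
    · refine ⟨h0, ?_⟩
      by_contra hc
      apply hne
      rw [if_pos h0]
      have hz : b j k = 0 := by omega
      rw [hz]
      simp
    · apply absurd _ hne
      rw [if_neg h0, mul_zero]
  refine Finset.sum_nbij' (fun a => a + dd j k) (fun b => b - dd j k) ?_ ?_ ?_ ?_ ?_
  · intro a ha
    rw [Finset.mem_filter] at ha ⊢
    obtain ⟨-, hPg, hr1, hr2⟩ := ha
    have hPgb : Pg s (a + dd j k) := Pg_add_dd hPg hr1 hr2
    refine ⟨hsupp _ hPgb, hPgb, ?_⟩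
    simp [Matrix.add_apply, dd_self]
  · intro b hb
    rw [Finset.mem_filter] at hb ⊢
    obtain ⟨-, hPg, hb0⟩ := hb
    obtain ⟨h1, h2, h3⟩ := Pg_sub_dd hPg hb0
    exact ⟨hsupp _ h1, h1, h2, h3⟩
  · intro a _
    exact add_dd_sub a j k
  · intro b hb
    rw [Finset.mem_filter] at hb
    exact sub_dd_add hb.2.1.1 hb.2.2
  · intro a ha
    rw [Finset.mem_filter] at ha
    obtain ⟨-, hPg, hr1, hr2⟩ := ha
    rw [if_pos hPg, if_pos (Pg_add_dd hPg hr1 hr2), ← hlam2]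
    exact termwise s W z (((Real.sqrt (vFact s) : ℂ))⁻¹)
      ((Real.sqrt (8 * π * m) : ℂ)) hjk a hr1 hr2
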